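/- For any chip configuration σ on K_n, the eventual period m(σ) of the parallel chip-firing dynamics satisfies m(σ) ≤ ν(σ), where ν(σ) = #{σ(v) : v ∈ [n]} is the number of distinct chip heights in σ. -/

import Mathlib

open Finset

/-- Number of unstable vertices of a chip configuration on `K n`. -/
def chipR (n : ℕ) (σ : Fin n → ℕ) : ℕ :=
  (Finset.univ.filter (fun v => n ≤ σ v)).card

/-- Parallel chip-firing update on the complete graph `K n`. -/
def chipU (n : ℕ) (σ : Fin n → ℕ) : Fin n → ℕ :=
  fun v => if n ≤ σ v then σ v + chipR n σ - n else σ v + chipR n σ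

/-- Total number of firings in the first `t` updates. -/
def chipAlpha (n : ℕ) (σ : Fin n → ℕ) (t : ℕ) : ℕ :=
  ∑ s ∈ Finset.range t, chipR n ((chipU n)^[s] σ)

/-- Number of times vertex `v` fires in the first `t` updates. -/
def odometer (n : ℕ) (σ : Fin n → ℕ) (t : ℕ) (v : Fin n) : ℕ :=
  ((Finset.range t).filter (fun s => n ≤ (chipU n)^[s] σ v)).card

/-- `a` is the activity of `σ`. -/
def Activity (n : ℕ) (σ : Fin n → ℕ) (a : ℝ) : Prop :=
  Filter.Tendsto (fun t : ℕ => (chipAlpha n σ t : ℝ) / (n * t)) Filter.atTop (nhds a)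

/-- A chip configuration is confined if all heights are at most `2n-1`
and the heights differ pairwise by at most `n-1`. -/
def Confined (n : ℕ) (σ : Fin n → ℕ) : Prop :=
  (∀ v, σ v ≤ 2 * n - 1) ∧ ∀ v w, σ v ≤ σ w + (n - 1)

/-- The eventual period: least `m ≥ 1` with `U^{t+m} σ = U^t σ` for all large `t`. -/
noncomputable def eventualPeriod (n : ℕ) (σ : Fin n → ℕ) : ℕ :=
  sInf {m | 1 ≤ m ∧ ∃ t₀, ∀ t ≥ t₀, (chipU n)^[t + m] σ = (chipU n)^[t] σ}

/-- The transient length of the dynamics started at `σ`. -/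
noncomputable def transientLength (n : ℕ) (σ : Fin n → ℕ) : ℕ :=
  sInf {t | ∃ t' > t, (chipU n)^[t'] σ = (chipU n)^[t] σ}

section ChipAux

variable {n : ℕ}

lemma chipR_le_n (σ : Fin n → ℕ) : chipR n σ ≤ n := by
  classical
  calc chipR n σ ≤ (Finset.univ : Finset (Fin n)).card := Finset.card_filter_le _ _
    _ = n := by simp

lemma chipU_add (σ : Fin n → ℕ) (v : Fin n) :
    chipU n σ v + n * (if n ≤ σ v then 1 else 0) = σ v + chipR n σ := by
  unfold chipU
  split <;> rename_i h <;> simp <;> omega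

lemma sum_chipU (σ : Fin n → ℕ) : ∑ v, chipU n σ v = ∑ v, σ v := by
  classical
  have h : ∑ v, (chipU n σ v + n * (if n ≤ σ v then 1 else 0))
      = ∑ v, (σ v + chipR n σ) := by
    simp only [chipU_add]
  rw [Finset.sum_add_distrib, Finset.sum_add_distrib, ← Finset.mul_sum] at h
  have h2 : ∑ v, (if n ≤ σ v then 1 else 0) = chipR n σ := by
    rw [chipR, Finset.card_filter]
  have h3 : ∑ _v : Fin n, chipR n σ = n * chipR n σ := by
    rw [Finset.sum_const]; simp [mul_comm]
  rw [h2, h3] at h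
  omega

lemma chipU_cast (σ : Fin n → ℕ) (v : Fin n) :
    ((chipU n σ v : ZMod n)) = (σ v : ZMod n) + (chipR n σ : ZMod n) := by
  unfold chipU
  split <;> rename_i h
  · have hle : n ≤ σ v + chipR n σ := le_trans h (Nat.le_add_right _ _)
    rw [Nat.cast_sub hle]
    push_cast
    simp
  · push_cast; ring

lemma sum_iterate (σ : Fin n → ℕ) (t : ℕ) :
    ∑ v, (chipU n)^[t] σ v = ∑ v, σ v := by
  induction t with
  | zero => simp
  | succ t ih =>
    rw [Function.iterate_succ_apply', sum_chipU]
    exact ih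

lemma image_card_step (σ : Fin n → ℕ) :
    (Finset.univ.image (chipU n σ)).card ≤ (Finset.univ.image σ).card := by
  classical
  have h : chipU n σ =
      (fun y => if n ≤ y then y + chipR n σ - n else y + chipR n σ) ∘ σ := rfl
  rw [h, ← Finset.image_image]
  exact Finset.card_image_le

lemma image_card_iterate (σ : Fin n → ℕ) (t : ℕ) :
    (Finset.univ.image ((chipU n)^[t] σ)).card ≤ (Finset.univ.image σ).card := by
  induction t with
  | zero => simp
  | succ t ih =>
    calc (Finset.univ.image ((chipU n)^[t+1] σ)).card
        = (Finset.univ.image (chipU n ((chipU n)^[t] σ))).card := by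
          rw [Function.iterate_succ_apply']
      _ ≤ (Finset.univ.image ((chipU n)^[t] σ)).card := image_card_step _
      _ ≤ _ := ih

end ChipAux

theorem core_period_bound (n : ℕ) (hn : 0 < n) (τ : Fin n → ℕ) (L : ℕ) (hL1 : 1 ≤ L)
    (hper : (chipU n)^[L] τ = τ)
    (hmin : ∀ d, 1 ≤ d → d < L → (chipU n)^[d] τ ≠ τ) :
    L ≤ (Finset.univ.image τ).card := by
  classical
  have hne : (Finset.univ : Finset (Fin n)).Nonempty := ⟨⟨0, hn⟩, Finset.mem_univ _⟩
  rcases eq_or_lt_of_le hL1 with h1 | hL2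
  · have : 1 ≤ (Finset.univ.image τ).card :=
      Finset.card_pos.mpr (hne.image τ)
    omega
  set x : ℕ → Fin n → ℕ := fun t => (chipU n)^[t] τ with hx
  have hxsucc : ∀ t, x (t + 1) = chipU n (x t) := fun t =>
    Function.iterate_succ_apply' (chipU n) t τ
  have hxL : x L = τ := hper
  have per : ∀ t, x (t + L) = x t := by
    intro t
    show (chipU n)^[t + L] τ = (chipU n)^[t] τ
    rw [Function.iterate_add_apply, hper]
  have perm : ∀ m t, x (t + m * L) = x t := by
    intro m
    induction m with
    | zero => simp
    | succ m ih =>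
      intro t
      have e : t + (m + 1) * L = (t + m * L) + L := by ring
      rw [e, per, ih]
  -- step A : no fixed point inside the cycle
  have stepA : ∀ t, x (t + 1) ≠ x t := by
    intro t h
    have hconst : ∀ s, x (t + s) = x t := by
      intro s
      induction s with
      | zero => rfl
      | succ s ih =>
        have e : t + (s + 1) = (t + s) + 1 := by ring
        rw [e, hxsucc, ih, ← hxsucc, h]
    have hk : ∃ s, t + s = (t + 1) * L := by
      have hmul : t + 1 ≤ (t + 1) * L := Nat.le_mul_of_pos_right _ hL1
      exact ⟨(t + 1) * L - t, by omega⟩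
    obtain ⟨s, hs⟩ := hk
    have h1 : x ((t + 1) * L) = τ := by
      have := perm (t + 1) 0
      simp at this
      exact this
    have h2 : τ = x t := by rw [← h1, ← hs, hconst]
    have h3 : (chipU n)^[1] τ = τ := by
      show x 1 = τ
      calc x 1 = x (1 + L) := (per 1).symm
        _ = chipU n (x L) := by rw [show 1 + L = L + 1 by ring, hxsucc]
        _ = chipU n (x t) := by rw [hxL, h2]
        _ = x (t + 1) := (hxsucc t).symm
        _ = x t := h
        _ = τ := h2.symm
    exact hmin 1 le_rfl hL2 h3
  -- step B : the number of firing vertices is < n at every time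
  have stepB : ∀ t, chipR n (x t) < n := by
    intro t
    rcases lt_or_ge (chipR n (x t)) n with h | h
    · exact h
    exfalso
    have hall : ∀ v, n ≤ x t v := by
      have hcard : (Finset.univ.filter (fun v => n ≤ x t v)).card = n :=
        le_antisymm (chipR_le_n _) h
      have huniv : (Finset.univ.filter (fun v => n ≤ x t v)) = Finset.univ := by
        apply Finset.eq_univ_of_card
        simpa using hcard
      intro v
      have hv : v ∈ Finset.univ.filter (fun v => n ≤ x t v) := by
        rw [huniv]; exact Finset.mem_univ v
      exact (Finset.mem_filter.mp hv).2
    have hfix : x (t + 1) = x t := by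
      rw [hxsucc]
      funext v
      unfold chipU
      rw [if_pos (hall v)]
      have hr : chipR n (x t) = n := le_antisymm (chipR_le_n _) h
      omega
    exact stepA t hfix
  -- step C : all heights ≤ 2n - 2 at every time
  have dec : ∀ t v, 2 * n - 1 ≤ x t v → x (t + 1) v < x t v := by
    intro t v h
    have hr := stepB t
    rw [hxsucc]
    unfold chipU
    rw [if_pos (by omega : n ≤ x t v)]
    omega
  have stay : ∀ t v, x t v ≤ 2 * n - 2 → x (t + 1) v ≤ 2 * n - 2 := by
    intro t v h
    have hr := stepB t
    rw [hxsucc]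
    unfold chipU
    split <;> rename_i hcase <;> omega
  have chain : ∀ k t v, x (t + k) v ≤ 2 * n - 2 ∨ x (t + k) v + k ≤ x t v := by
    intro k
    induction k with
    | zero => intro t v; right; simp
    | succ k ih =>
      intro t v
      have e : t + (k + 1) = (t + k) + 1 := by ring
      rcases ih t v with h | h
      · left; rw [e]; exact stay _ _ h
      rcases le_or_gt (x (t + k) v) (2 * n - 2) with h2 | h2
      · left; rw [e]; exact stay _ _ h2
      · right
        have hd := dec (t + k) v (by omega)
        rw [e]
        omega
  have stepC : ∀ t v, x t v ≤ 2 * n - 2 := by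
    intro t v
    have h := chain (1 * L) t v
    rw [perm 1 t] at h
    rcases h with h | h
    · exact h
    · omega
  -- step D : window bounds for heights after one step
  have stepD : ∀ t v, chipR n (x t) ≤ x (t + 1) v ∧
      x (t + 1) v ≤ chipR n (x t) + (n - 1) := by
    intro t v
    have hc := stepC t v
    have hr := stepB t
    rw [hxsucc]
    unfold chipU
    split <;> rename_i hcase <;> constructor <;> omega
  -- step E : pairwise height differences ≤ n - 1 at every time
  have stepE : ∀ t v w, x t v ≤ x t w + (n - 1) := by
    have key : ∀ t v w, x (t + 1) v ≤ x (t + 1) w + (n - 1) := by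
      intro t v w
      have h1 := stepD t v
      have h2 := stepD t w
      omega
    intro t v w
    cases t with
    | zero =>
      have h := key (L - 1) v w
      have e : L - 1 + 1 = L := by omega
      rw [e, hxL] at h
      exact h
    | succ t => exact key t v w
  -- step F : height differences mod n are invariant
  have stepF : ∀ t v w, (x t v : ZMod n) - (x t w : ZMod n)
      = (τ v : ZMod n) - (τ w : ZMod n) := by
    intro t
    induction t with
    | zero => intro v w; rfl
    | succ t ih =>
      intro v w
      rw [hxsucc]
      rw [show ((chipU n (x t) v : ZMod n)) = (x t v : ZMod n) + (chipR n (x t) : ZMod n)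
        from chipU_cast _ _]
      rw [show ((chipU n (x t) w : ZMod n)) = (x t w : ZMod n) + (chipR n (x t) : ZMod n)
        from chipU_cast _ _]
      have h := ih v w
      linear_combination h
  -- choose a minimal vertex at each time
  have hex : ∀ t, ∃ v : Fin n, ∀ w, x t v ≤ x t w := by
    intro t
    obtain ⟨v, _, hv⟩ := Finset.exists_min_image Finset.univ (x t) hne
    exact ⟨v, fun w => hv w (Finset.mem_univ w)⟩
  choose vt hvt using hex
  haveI : NeZero n := ⟨hn.ne'⟩
  -- step H : the class of the minimal vertex determines the configuration
  have stepH : ∀ t t', τ (vt t) = τ (vt t') → x t = x t' := by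
    intro t t' hτ
    have hdlt : ∀ v, x t v - x t (vt t) < n := by
      intro v
      have h1 := stepE t v (vt t)
      have h2 := hvt t v
      omega
    have hdlt' : ∀ v, x t' v - x t' (vt t') < n := by
      intro v
      have h1 := stepE t' v (vt t')
      have h2 := hvt t' v
      omega
    have key : ∀ v, x t v - x t (vt t) = x t' v - x t' (vt t') := by
      intro v
      have c1 : ((x t v - x t (vt t) : ℕ) : ZMod n)
          = ((x t' v - x t' (vt t') : ℕ) : ZMod n) := by
        rw [Nat.cast_sub (hvt t v), Nat.cast_sub (hvt t' v)]
        rw [stepF t v (vt t), stepF t' v (vt t'), hτ]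
      have h := congrArg ZMod.val c1
      rwa [ZMod.val_cast_of_lt (hdlt v), ZMod.val_cast_of_lt (hdlt' v)] at h
    have hsum : ∑ v, x t v = ∑ v, x t' v := by
      show ∑ v, (chipU n)^[t] τ v = ∑ v, (chipU n)^[t'] τ v
      rw [sum_iterate, sum_iterate]
    have expand : ∀ s, ∑ v, x s v = n * x s (vt s) + ∑ v, (x s v - x s (vt s)) := by
      intro s
      have hv : ∀ v, x s v = x s (vt s) + (x s v - x s (vt s)) := fun v => by
        have := hvt s v; omega
      calc ∑ v, x s v = ∑ v, (x s (vt s) + (x s v - x s (vt s))) :=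
            Finset.sum_congr rfl (fun v _ => hv v)
        _ = n * x s (vt s) + ∑ v, (x s v - x s (vt s)) := by
            rw [Finset.sum_add_distrib, Finset.sum_const, Finset.card_univ,
              Fintype.card_fin, smul_eq_mul]
    have hsums_eq : ∑ v, (x t v - x t (vt t)) = ∑ v, (x t' v - x t' (vt t')) :=
      Finset.sum_congr rfl (fun v _ => key v)
    have hmm : n * x t (vt t) = n * x t' (vt t') := by
      have h1 := expand t
      have h2 := expand t'
      omega
    have hmeq : x t (vt t) = x t' (vt t') := Nat.eq_of_mul_eq_mul_left hn hmm
    funext v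
    have hk := key v
    have h1 := hvt t v
    have h2 := hvt t' v
    omega
  -- step I : injectivity and conclusion
  have aux : ∀ a b, a < b → b < L → x a = x b → False := by
    intro a b hab hbL heq
    have e1 : x ((L - b) + b) = (chipU n)^[L - b] (x b) :=
      Function.iterate_add_apply (chipU n) (L - b) b τ
    have e2 : x ((L - b) + a) = (chipU n)^[L - b] (x a) :=
      Function.iterate_add_apply (chipU n) (L - b) a τ
    have e3 : x ((L - b) + a) = τ := by
      rw [e2, heq, ← e1, show (L - b) + b = L by omega, hxL]
    exact hmin ((L - b) + a) (by omega) (by omega) e3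
  have hinj : Set.InjOn (fun t => τ (vt t)) ↑(Finset.range L) := by
    intro a ha b hb hab
    simp only [Finset.coe_range, Set.mem_Iio] at ha hb
    rcases lt_trichotomy a b with h | h | h
    · exact (aux a b h hb (stepH a b hab)).elim
    · exact h
    · exact (aux b a h ha (stepH a b hab).symm).elim
  have hcard := Finset.card_le_card_of_injOn (fun t => τ (vt t))
    (fun a _ => Finset.mem_image_of_mem τ (Finset.mem_univ (vt a))) hinj
  simpa using hcard

theorem period_le_distinct_heights (n : ℕ) (hn : 0 < n) (σ : Fin n → ℕ) :
    eventualPeriod n σ ≤ (Finset.univ.image σ).card := by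
  classical
  -- pigeonhole: the trajectory repeats
  set T := ∑ v, σ v with hT
  have hbd : ∀ t v, (chipU n)^[t] σ v < T + 1 := by
    intro t v
    have h1 : (chipU n)^[t] σ v ≤ ∑ w, (chipU n)^[t] σ w :=
      Finset.single_le_sum (fun i _ => Nat.zero_le _) (Finset.mem_univ v)
    have h2 := sum_iterate σ t
    omega
  obtain ⟨t1, t2, hne12, hFeq⟩ :=
    Finite.exists_ne_map_eq_of_infinite
      (fun t : ℕ => (fun v => (⟨(chipU n)^[t] σ v, hbd t v⟩ : Fin (T + 1))))
  have heq : (chipU n)^[t1] σ = (chipU n)^[t2] σ :=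
    funext fun v => congrArg Fin.val (congrFun hFeq v)
  -- reorder so that a < b
  obtain ⟨a, b, hab, hab2⟩ : ∃ a b : ℕ, a < b ∧ (chipU n)^[a] σ = (chipU n)^[b] σ := by
    rcases lt_or_gt_of_ne hne12 with h | h
    · exact ⟨t1, t2, h, heq⟩
    · exact ⟨t2, t1, h, heq.symm⟩
  set τ : Fin n → ℕ := (chipU n)^[a] σ with hτ
  have hpp : (chipU n)^[b - a] τ = τ := by
    rw [hτ, ← Function.iterate_add_apply, show b - a + a = b by omega, ← hab2]
  -- minimal period of the purely periodic τ
  set S : Set ℕ := {d | 1 ≤ d ∧ (chipU n)^[d] τ = τ} with hS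
  have hSne : S.Nonempty := ⟨b - a, by omega, hpp⟩
  set L := sInf S with hL
  obtain ⟨hL1, hperL⟩ : 1 ≤ L ∧ (chipU n)^[L] τ = τ := Nat.sInf_mem hSne
  have hminL : ∀ d, 1 ≤ d → d < L → (chipU n)^[d] τ ≠ τ := by
    intro d hd1 hdL hcon
    exact Nat.notMem_of_lt_sInf hdL ⟨hd1, hcon⟩
  -- L is an eventual period of σ
  have hmem : L ∈ {m | 1 ≤ m ∧ ∃ t₀, ∀ t ≥ t₀, (chipU n)^[t + m] σ = (chipU n)^[t] σ} := by
    refine ⟨hL1, a, fun t ht => ?_⟩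
    have e1 : (chipU n)^[t + L] σ = (chipU n)^[(t - a) + L] τ := by
      rw [hτ, ← Function.iterate_add_apply]
      congr 1
      omega
    have e2 : (chipU n)^[(t - a) + L] τ = (chipU n)^[t - a] τ := by
      rw [Function.iterate_add_apply, hperL]
    have e3 : (chipU n)^[t - a] τ = (chipU n)^[t] σ := by
      rw [hτ, ← Function.iterate_add_apply]
      congr 1
      omega
    rw [e1, e2, e3]
  have hEP : eventualPeriod n σ ≤ L := Nat.sInf_le hmem
  have hcore := core_period_bound n hn τ L hL1 hperL hminL
  have hmono : (Finset.univ.image τ).card ≤ (Finset.univ.image σ).card := by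
    rw [hτ]
    exact image_card_iterate σ a
  omega
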